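/- Proposition 2 (Crocco-type theorem for complex fluids, with ∂_νφ eliminated via the substructural balance): For a steady non-isentropic flow of a complex fluid with order-parameter values in ℝᵏ satisfying both the steady momentum balance ρ (Dv)v = div T with T = −p̃ I − T̄^E and the steady substructural balance div S − z = v·grad(∂_ν̇χ) − ∂_νχ, the following pointwise relation holds throughout B for every index i: (ω × v)_i = ϑ ∂_iη − ∂_i h_c − Σ_α ∂_i( ι ( Σ_j ∂_j S_α^j − v·grad((∂_ν̇χ)_α) + (∂_νχ)_α ) ) ν^α − Σ_{α,j} ∂_i((∂_Nφ)_α^j) ∂_jν^α − ι Σ_α ∂_iν^α ( Σ_j ∂_j((∂_Nφ)_α^j) ) − ι Σ_{α,j} (∂_Nφ)_α^j ∂_j∂_iν^α. -/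

import Mathlib

noncomputable section

/-- Points of ℝ³. -/
abbrev V3 : Type := Fin 3 → ℝ

/-- Partial derivative ∂ᵢ of a scalar field on ℝ³. -/
def pd (i : Fin 3) (f : V3 → ℝ) (x : V3) : ℝ :=
  fderiv ℝ f x (Pi.single i 1)

/-- Cross product on ℝ³. -/
def cross (a b : V3) : V3 :=
  ![a 1 * b 2 - a 2 * b 1,
    a 2 * b 0 - a 0 * b 2,
    a 0 * b 1 - a 1 * b 0]

/-- Curl of a vector field on ℝ³. -/
def curl (u : V3 → V3) (x : V3) : V3 :=
  ![pd 1 (fun y => u y 2) x - pd 2 (fun y => u y 1) x,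
    pd 2 (fun y => u y 0) x - pd 0 (fun y => u y 2) x,
    pd 0 (fun y => u y 1) x - pd 1 (fun y => u y 0) x]

/-- A steady complex fluid on an open set `B ⊆ ℝ³` with order-parameter values
in `ℝᵏ`: smooth fields `ρ > 0` (mass density), `η` (entropy), `v` (velocity),
`ν` (order parameter), a smooth potential `φ = φ(ι, n, N, η)` and a smooth
kinetic co-energy `χ = χ(n, ṅ)`. -/
structure ComplexFluid (k : ℕ) where
  B : Set V3
  hB : IsOpen B
  ρ : V3 → ℝ
  η : V3 → ℝ
  v : V3 → V3
  ν : V3 → Fin k → ℝ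
  φ : ℝ × (Fin k → ℝ) × (Fin k → Fin 3 → ℝ) × ℝ → ℝ
  χ : (Fin k → ℝ) × (Fin k → ℝ) → ℝ
  hρ : ContDiffOn ℝ (⊤ : ℕ∞) ρ B
  hη : ContDiffOn ℝ (⊤ : ℕ∞) η B
  hv : ContDiffOn ℝ (⊤ : ℕ∞) v B
  hν : ContDiffOn ℝ (⊤ : ℕ∞) ν B
  hφ : ContDiff ℝ (⊤ : ℕ∞) φ
  hχ : ContDiff ℝ (⊤ : ℕ∞) χ
  hρpos : ∀ x ∈ B, 0 < ρ x

namespace ComplexFluid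

variable {k : ℕ} (K : ComplexFluid k)

/-- Specific volume `ι = 1/ρ`. -/
def ι (x : V3) : ℝ := (K.ρ x)⁻¹

/-- Gradient of the order parameter, components `(Dν)_α^j = ∂_jν^α`. -/
def Dν (x : V3) (α : Fin k) (j : Fin 3) : ℝ := pd j (fun y => K.ν y α) x

/-- The point `(ι(x), ν(x), Dν(x), η(x))` at which `φ` and its partial
derivatives are evaluated. -/
def pt (x : V3) : ℝ × (Fin k → ℝ) × (Fin k → Fin 3 → ℝ) × ℝ :=
  (K.ι x, K.ν x, K.Dν x, K.η x)

/-- `∂_ιφ` evaluated along the fields. -/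
def dφι (x : V3) : ℝ := fderiv ℝ K.φ (K.pt x) (1, 0, 0, 0)

/-- `(∂_νφ)_α` evaluated along the fields. -/
def dφν (x : V3) (α : Fin k) : ℝ := fderiv ℝ K.φ (K.pt x) (0, Pi.single α 1, 0, 0)

/-- `(∂_Nφ)_α^j` evaluated along the fields. -/
def dφN (x : V3) (α : Fin k) (j : Fin 3) : ℝ :=
  fderiv ℝ K.φ (K.pt x) (0, 0, Pi.single α (Pi.single j 1), 0)

/-- Temperature `ϑ = ∂_ηφ` evaluated along the fields. -/
def temp (x : V3) : ℝ := fderiv ℝ K.φ (K.pt x) (0, 0, 0, 1)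

/-- Convective rate `ν̇ = (Dν)v`. -/
def νdot (x : V3) (α : Fin k) : ℝ := ∑ j, K.Dν x α j * K.v x j

/-- `(∂_νχ)_α` evaluated along the fields. -/
def dχν (x : V3) (α : Fin k) : ℝ :=
  fderiv ℝ K.χ (K.ν x, K.νdot x) (Pi.single α 1, 0)

/-- The field `(∂_ν̇χ)_α` evaluated along the fields. -/
def dχνdot (x : V3) (α : Fin k) : ℝ :=
  fderiv ℝ K.χ (K.ν x, K.νdot x) (0, Pi.single α 1)

/-- Pressure `p̃ = −∂_ιφ`. -/
def ptil (x : V3) : ℝ := -(K.dφι x)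

/-- Microstress `S = ρ ∂_Nφ`. -/
def S (x : V3) (α : Fin k) (j : Fin 3) : ℝ := K.ρ x * K.dφN x α j

/-- Self-interaction `z = ρ ∂_νφ`. -/
def z (x : V3) (α : Fin k) : ℝ := K.ρ x * K.dφν x α

/-- Ericksen stress `(T̄^E)_{ij} = Σ_α ∂_iν^α (∂_Nφ)_α^j`. -/
def TE (x : V3) (i j : Fin 3) : ℝ := ∑ α, K.Dν x α i * K.dφN x α j

/-- Specific enthalpy `ξ_c = φ − ι ∂_ιφ − ∂_νφ·ν − ∂_Nφ·Dν`. -/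
def ξc (x : V3) : ℝ :=
  K.φ (K.pt x) - K.ι x * K.dφι x - (∑ α, K.dφν x α * K.ν x α)
    - ∑ α, ∑ j, K.dφN x α j * K.Dν x α j

/-- Total enthalpy `h_c = (1/2)|v|² + ξ_c`. -/
def hc (x : V3) : ℝ := (1 / 2) * (∑ i, (K.v x i) ^ 2) + K.ξc x

/-- Steady momentum balance `ρ (Dv)v = div T` with `T = −p̃ I − T̄^E`
(stated componentwise). -/
def MomentumBalance : Prop :=
  ∀ x ∈ K.B, ∀ i : Fin 3,
    K.ρ x * ∑ j, pd j (fun y => K.v y i) x * K.v x j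
      = ∑ j, pd j (fun y => -(K.ptil y) * (if i = j then (1:ℝ) else 0) - K.TE y i j) x

/-- Steady substructural balance `div S − z = v·grad(∂_ν̇χ) − ∂_νχ`
(stated componentwise on the order-parameter index). -/
def SubstructuralBalance : Prop :=
  ∀ x ∈ K.B, ∀ α : Fin k,
    (∑ j, pd j (fun y => K.S y α j) x) - K.z x α
      = (∑ j, K.v x j * pd j (fun y => K.dχνdot y α) x) - K.dχν x α

end ComplexFluid


namespace CroccoAux

open ComplexFluid

lemma etop1 : (1 : WithTop ℕ∞) ≤ ((⊤:ℕ∞) : WithTop ℕ∞) := by exact_mod_cast le_top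
lemma etop2 : ((⊤:ℕ∞) : WithTop ℕ∞) + 1 ≤ ((⊤:ℕ∞) : WithTop ℕ∞) := by exact_mod_cast le_top

lemma pd_congr {f g : V3 → ℝ} {x : V3} (h : f =ᶠ[nhds x] g) (i : Fin 3) :
    pd i f x = pd i g x := by unfold pd; rw [h.fderiv_eq]

lemma pd_add {f g : V3 → ℝ} {x : V3} (i : Fin 3) (hf : DifferentiableAt ℝ f x)
    (hg : DifferentiableAt ℝ g x) :
    pd i (fun y => f y + g y) x = pd i f x + pd i g x := by
  unfold pd; rw [fderiv_fun_add hf hg]; simp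

lemma pd_sub {f g : V3 → ℝ} {x : V3} (i : Fin 3) (hf : DifferentiableAt ℝ f x)
    (hg : DifferentiableAt ℝ g x) :
    pd i (fun y => f y - g y) x = pd i f x - pd i g x := by
  unfold pd; rw [fderiv_fun_sub hf hg]; simp

lemma pd_mul {f g : V3 → ℝ} {x : V3} (i : Fin 3) (hf : DifferentiableAt ℝ f x)
    (hg : DifferentiableAt ℝ g x) :
    pd i (fun y => f y * g y) x = pd i f x * g x + f x * pd i g x := by
  unfold pd; rw [fderiv_fun_mul hf hg]; simp; ring

lemma pd_sum {ι' : Type*} {s : Finset ι'} {f : ι' → V3 → ℝ} {x : V3} (i : Fin 3)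
    (hf : ∀ a ∈ s, DifferentiableAt ℝ (f a) x) :
    pd i (fun y => ∑ a ∈ s, f a y) x = ∑ a ∈ s, pd i (f a) x := by
  unfold pd; rw [fderiv_fun_sum hf]; simp

lemma pd_const_mul {f : V3 → ℝ} {x : V3} (i : Fin 3) (c : ℝ) (hf : DifferentiableAt ℝ f x) :
    pd i (fun y => c * f y) x = c * pd i f x := by
  unfold pd; rw [fderiv_const_mul hf]; simp

lemma pd_mul_const {f : V3 → ℝ} {x : V3} (i : Fin 3) (c : ℝ) (hf : DifferentiableAt ℝ f x) :
    pd i (fun y => f y * c) x = pd i f x * c := by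
  unfold pd; rw [fderiv_mul_const hf]; simp [mul_comm]

/-- The state space of the potential. -/
abbrev PS (k : ℕ) : Type := ℝ × (Fin k → ℝ) × (Fin k → Fin 3 → ℝ) × ℝ

lemma clm_decomp {k : ℕ} (L : PS k →L[ℝ] ℝ)
    (a : ℝ) (b : Fin k → ℝ) (c : Fin k → Fin 3 → ℝ) (d : ℝ) :
    L (a, b, c, d)
      = a * L (1, 0, 0, 0) + (∑ α, b α * L (0, Pi.single α 1, 0, 0))
        + (∑ α, ∑ j, c α j * L (0, 0, Pi.single α (Pi.single j 1), 0)) + d * L (0, 0, 0, 1) := by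
  have key : ((a, b, c, d) : PS k) = a • ((1, 0, 0, 0) : PS k)
      + (∑ α, b α • ((0, Pi.single α 1, 0, 0) : PS k))
      + (∑ α, ∑ j, c α j • ((0, 0, Pi.single α (Pi.single j 1), 0) : PS k))
      + d • ((0, 0, 0, 1) : PS k) := by
    refine Prod.ext ?_ (Prod.ext ?_ (Prod.ext ?_ ?_)) <;>
      simp [Prod.fst_sum, Prod.snd_sum]
    · funext β
      simp [Finset.sum_apply, Pi.single_apply]
    · funext β l
      simp [Finset.sum_apply, Pi.single_apply, apply_ite (fun g : Fin 3 → ℝ => g l),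
        mul_ite, Finset.sum_ite_eq]
  rw [key]
  simp only [map_add, map_sum, map_smul, smul_eq_mul]

variable {k : ℕ} (K : ComplexFluid k)

lemma cd_ι : ContDiffOn ℝ (⊤:ℕ∞) K.ι K.B :=
  K.hρ.inv fun y hy => (K.hρpos y hy).ne'

lemma cd_νc (α : Fin k) : ContDiffOn ℝ (⊤:ℕ∞) (fun y => K.ν y α) K.B :=
  contDiffOn_pi.1 K.hν α

lemma cd_vc (j : Fin 3) : ContDiffOn ℝ (⊤:ℕ∞) (fun y => K.v y j) K.B :=
  contDiffOn_pi.1 K.hv j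

lemma cd_Dνc (α : Fin k) (j : Fin 3) :
    ContDiffOn ℝ (⊤:ℕ∞) (fun y => K.Dν y α j) K.B := by
  have h1 : ContDiffOn ℝ (⊤:ℕ∞) (fderiv ℝ (fun w => K.ν w α)) K.B :=
    (cd_νc K α).fderiv_of_isOpen K.hB etop2
  exact (ContinuousLinearMap.apply ℝ ℝ (Pi.single j 1 : V3)).contDiff.comp_contDiffOn h1

lemma cd_Dν : ContDiffOn ℝ (⊤:ℕ∞) (fun y => K.Dν y) K.B :=
  contDiffOn_pi.2 fun α => contDiffOn_pi.2 fun j => cd_Dνc K α j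

lemma cd_Dνm (α : Fin k) : ContDiffOn ℝ (⊤:ℕ∞) (fun y => K.Dν y α) K.B :=
  contDiffOn_pi.2 fun j => cd_Dνc K α j

lemma cd_pt : ContDiffOn ℝ (⊤:ℕ∞) K.pt K.B :=
  (cd_ι K).prodMk (K.hν.prodMk ((cd_Dν K).prodMk K.hη))

lemma cd_dφ (w : PS k) :
    ContDiffOn ℝ (⊤:ℕ∞) (fun y => fderiv ℝ K.φ (K.pt y) w) K.B :=
  (ContinuousLinearMap.apply ℝ ℝ w).contDiff.comp_contDiffOn
    ((K.hφ.fderiv_right etop2).comp_contDiffOn (cd_pt K))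

lemma diffAt_of {F : Type*} [NormedAddCommGroup F] [NormedSpace ℝ F] {f : V3 → F} {x : V3}
    (hf : ContDiffOn ℝ (⊤:ℕ∞) f K.B) (hx : x ∈ K.B) : DifferentiableAt ℝ f x :=
  (hf.contDiffAt (K.hB.mem_nhds hx)).differentiableAt (by simp)

lemma pd_phi {x : V3} (hx : x ∈ K.B) (i : Fin 3) :
    pd i (fun y => K.φ (K.pt y)) x
      = pd i K.ι x * K.dφι x
        + (∑ α, pd i (fun y => K.ν y α) x * K.dφν x α)
        + (∑ α, ∑ j, pd i (fun y => K.Dν y α j) x * K.dφN x α j)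
        + pd i K.η x * K.temp x := by
  have hι := diffAt_of K (cd_ι K) hx
  have hν : DifferentiableAt ℝ (fun y => K.ν y) x := diffAt_of K K.hν hx
  have hDν : DifferentiableAt ℝ (fun y => K.Dν y) x := diffAt_of K (cd_Dν K) hx
  have hη := diffAt_of K K.hη hx
  have hrest : DifferentiableAt ℝ (fun y => (K.ν y, K.Dν y, K.η y)) x :=
    hν.prodMk (hDν.prodMk hη)
  have hpt : DifferentiableAt ℝ K.pt x := hι.prodMk hrest
  have hφd : DifferentiableAt ℝ K.φ (K.pt x) :=
    (K.hφ.differentiable (by simp)).differentiableAt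
  have hcomp : fderiv ℝ (fun y => K.φ (K.pt y)) x
      = (fderiv ℝ K.φ (K.pt x)).comp (fderiv ℝ K.pt x) := fderiv_comp x hφd hpt
  have hν' : ∀ α, DifferentiableAt ℝ (fun y => K.ν y α) x :=
    fun α => diffAt_of K (cd_νc K α) hx
  have hDν' : ∀ α j, DifferentiableAt ℝ (fun y => K.Dν y α j) x :=
    fun α j => diffAt_of K (cd_Dνc K α j) hx
  have hDνm : ∀ α, DifferentiableAt ℝ (fun y => K.Dν y α) x :=
    fun α => diffAt_of K (cd_Dνm K α) hx
  have hptd : fderiv ℝ K.pt x = (fderiv ℝ K.ι x).prod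
      ((fderiv ℝ (fun y => K.ν y) x).prod
        ((fderiv ℝ (fun y => K.Dν y) x).prod (fderiv ℝ K.η x))) := by
    rw [show K.pt = fun y => (K.ι y, (K.ν y, K.Dν y, K.η y)) from rfl]
    rw [DifferentiableAt.fderiv_prodMk hι hrest,
        DifferentiableAt.fderiv_prodMk hν (hDν.prodMk hη),
        DifferentiableAt.fderiv_prodMk hDν hη]
  have hνpi : fderiv ℝ (fun y => K.ν y) x
      = ContinuousLinearMap.pi (fun α => fderiv ℝ (fun y => K.ν y α) x) := fderiv_pi hν'
  have hDνpi : fderiv ℝ (fun y => K.Dν y) x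
      = ContinuousLinearMap.pi (fun α => fderiv ℝ (fun y => K.Dν y α) x) := fderiv_pi hDνm
  have hDνpi2 : ∀ α, fderiv ℝ (fun y => K.Dν y α) x
      = ContinuousLinearMap.pi (fun j => fderiv ℝ (fun y => K.Dν y α j) x) :=
    fun α => fderiv_pi (hDν' α)
  have ht : fderiv ℝ K.pt x (Pi.single i 1)
      = ((pd i K.ι x, (fun α => pd i (fun y => K.ν y α) x),
          (fun α j => pd i (fun y => K.Dν y α j) x), pd i K.η x) : PS k) := by
    rw [hptd]
    refine Prod.ext ?_ (Prod.ext ?_ (Prod.ext ?_ ?_))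
    · rfl
    · funext α
      simp only [ContinuousLinearMap.prod_apply, hνpi, ContinuousLinearMap.pi_apply]
      rfl
    · funext α j
      simp only [ContinuousLinearMap.prod_apply, hDνpi, ContinuousLinearMap.pi_apply, hDνpi2]
      rfl
    · rfl
  show fderiv ℝ (fun y => K.φ (K.pt y)) x (Pi.single i 1) = _
  rw [hcomp, ContinuousLinearMap.comp_apply, ht]
  exact clm_decomp _ _ _ _ _

end CroccoAux

/-- Proposition 2, Crocco-type theorem for complex fluids, with
`∂_νφ` eliminated via the substructural balance: for a steady non-isentropic
flow of a complex fluid satisfying both the steady momentum balance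
`ρ (Dv)v = div T`, `T = −p̃ I − T̄^E`, and the steady substructural balance
`div S − z = v·grad(∂_ν̇χ) − ∂_νχ`, at every point of `B` and for every `i`:
`(ω × v)_i = ϑ ∂_iη − ∂_i h_c`
`  − Σ_α ∂_i( ι ( Σ_j ∂_j S_α^j − v·grad((∂_ν̇χ)_α) + (∂_νχ)_α ) ) ν^α`
`  − Σ_{α,j} ∂_i((∂_Nφ)_α^j) ∂_jν^α`
`  − ι Σ_α ∂_iν^α ( Σ_j ∂_j((∂_Nφ)_α^j) )`
`  − ι Σ_{α,j} (∂_Nφ)_α^j ∂_j∂_iν^α`. -/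
theorem complexFluid_crocco
    {k : ℕ} (K : ComplexFluid k)
    (hbal : K.MomentumBalance) (hsub : K.SubstructuralBalance) :
    ∀ x ∈ K.B, ∀ i : Fin 3,
      cross (curl K.v x) (K.v x) i
        = K.temp x * pd i K.η x
          - pd i K.hc x
          - (∑ α, pd i (fun y => K.ι y *
              ((∑ j, pd j (fun w => K.S w α j) y)
                - (∑ j, K.v y j * pd j (fun w => K.dχνdot w α) y)
                + K.dχν y α)) x * K.ν x α)
          - (∑ α, ∑ j, pd i (fun y => K.dφN y α j) x * K.Dν x α j)
          - K.ι x * (∑ α, K.Dν x α i * (∑ j, pd j (fun y => K.dφN y α j) x))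
          - K.ι x * ∑ α, ∑ j, K.dφN x α j * pd j (fun y => K.Dν y α i) x := by
  open CroccoAux in
  intro x hx i
  have nb : K.B ∈ nhds x := K.hB.mem_nhds hx
  have hρ0 : K.ρ x ≠ 0 := (K.hρpos x hx).ne'
  -- differentiability facts at x
  have dι := diffAt_of K (cd_ι K) hx
  have dη := diffAt_of K K.hη hx
  have dv : ∀ j, DifferentiableAt ℝ (fun y => K.v y j) x :=
    fun j => diffAt_of K (cd_vc K j) hx
  have dν : ∀ α, DifferentiableAt ℝ (fun y => K.ν y α) x :=
    fun α => diffAt_of K (cd_νc K α) hx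
  have dDν : ∀ α j, DifferentiableAt ℝ (fun y => K.Dν y α j) x :=
    fun α j => diffAt_of K (cd_Dνc K α j) hx
  have ddφι : DifferentiableAt ℝ (fun y => K.dφι y) x :=
    diffAt_of K (cd_dφ K (1, 0, 0, 0)) hx
  have ddφν : ∀ α, DifferentiableAt ℝ (fun y => K.dφν y α) x :=
    fun α => diffAt_of K (cd_dφ K (0, Pi.single α 1, 0, 0)) hx
  have ddφN : ∀ α j, DifferentiableAt ℝ (fun y => K.dφN y α j) x :=
    fun α j => diffAt_of K (cd_dφ K (0, 0, Pi.single α (Pi.single j 1), 0)) hx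
  have dφpt : DifferentiableAt ℝ (fun y => K.φ (K.pt y)) x :=
    diffAt_of K (K.hφ.comp_contDiffOn (cd_pt K)) hx
  -- Step 1 : cross product identity
  have h1 : cross (curl K.v x) (K.v x) i
      = (∑ j, pd j (fun y => K.v y i) x * K.v x j)
        - (∑ j, K.v x j * pd i (fun y => K.v y j) x) := by
    fin_cases i <;> simp [cross, curl, Fin.sum_univ_three] <;> ring
  -- Step 2 : expand momentum balance RHS
  have hTEd : ∀ j, DifferentiableAt ℝ (fun y => K.TE y i j) x := by
    intro j
    have he : (fun y => K.TE y i j) = fun y => ∑ α, K.Dν y α i * K.dφN y α j := rfl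
    rw [he]
    exact DifferentiableAt.fun_sum fun α _ => (dDν α i).fun_mul (ddφN α j)
  have h2 : (∑ j, pd j (fun y => -K.ptil y * (if i = j then (1:ℝ) else 0) - K.TE y i j) x)
      = pd i (fun y => K.dφι y) x
        - ∑ j, ∑ α, (pd j (fun y => K.Dν y α i) x * K.dφN x α j
            + K.Dν x α i * pd j (fun y => K.dφN y α j) x) := by
    have hjj : ∀ j : Fin 3,
        pd j (fun y => -K.ptil y * (if i = j then (1:ℝ) else 0) - K.TE y i j) x
        = pd j (fun y => K.dφι y) x * (if i = j then (1:ℝ) else 0)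
          - ∑ α, (pd j (fun y => K.Dν y α i) x * K.dφN x α j
              + K.Dν x α i * pd j (fun y => K.dφN y α j) x) := by
      intro j
      have hfe : (fun y => -K.ptil y * (if i = j then (1:ℝ) else 0) - K.TE y i j)
          = fun y => K.dφι y * (if i = j then (1:ℝ) else 0) - K.TE y i j := by
        funext y; simp [ComplexFluid.ptil]
      rw [hfe, pd_sub j (ddφι.mul_const _) (hTEd j), pd_mul_const j _ ddφι]
      congr 1
      have he : (fun y => K.TE y i j) = fun y => ∑ α, K.Dν y α i * K.dφN y α j := rfl
      rw [he, pd_sum j (fun α _ => (dDν α i).fun_mul (ddφN α j))]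
      exact Finset.sum_congr rfl fun α _ => pd_mul j (dDν α i) (ddφN α j)
    rw [Finset.sum_congr rfl fun j _ => hjj j, Finset.sum_sub_distrib]
    congr 1
    simp [mul_ite, mul_one, mul_zero, Finset.sum_ite_eq]
  -- Step 3 : momentum balance solved for the convective term
  have hA : (∑ j, pd j (fun y => K.v y i) x * K.v x j)
      = K.ι x * (pd i (fun y => K.dφι y) x
          - ((∑ α, ∑ j, K.dφN x α j * pd j (fun y => K.Dν y α i) x)
            + (∑ α, K.Dν x α i * (∑ j, pd j (fun y => K.dφN y α j) x)))) := by
    have hm := hbal x hx i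
    rw [h2] at hm
    have hsum : (∑ j, ∑ α, (pd j (fun y => K.Dν y α i) x * K.dφN x α j
            + K.Dν x α i * pd j (fun y => K.dφN y α j) x))
        = (∑ α, ∑ j, K.dφN x α j * pd j (fun y => K.Dν y α i) x)
          + (∑ α, K.Dν x α i * (∑ j, pd j (fun y => K.dφN y α j) x)) := by
      rw [Finset.sum_comm]
      simp only [Finset.sum_add_distrib]
      congr 1
      · exact Finset.sum_congr rfl fun α _ => Finset.sum_congr rfl fun j _ => mul_comm _ _
      · exact Finset.sum_congr rfl fun α _ => (Finset.mul_sum _ _ _).symm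
    rw [hsum] at hm
    have h3 := congrArg (fun t => K.ι x * t) hm
    simpa [ComplexFluid.ι, inv_mul_cancel_left₀ hρ0] using h3
  -- Step 4 : substructural balance eliminates the microstructural term
  have h3 : ∀ α, pd i (fun y => K.ι y *
        ((∑ j, pd j (fun w => K.S w α j) y)
          - (∑ j, K.v y j * pd j (fun w => K.dχνdot w α) y)
          + K.dχν y α)) x
      = pd i (fun y => K.dφν y α) x := by
    intro α
    refine pd_congr ?_ i
    filter_upwards [nb] with y hy
    have hs := hsub y hy α
    have hρ0' : K.ρ y ≠ 0 := (K.hρpos y hy).ne'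
    have hzz : K.z y α = K.ρ y * K.dφν y α := rfl
    have hz : (∑ j, pd j (fun w => K.S w α j) y)
        - (∑ j, K.v y j * pd j (fun w => K.dχνdot w α) y) + K.dχν y α
        = K.ρ y * K.dφν y α := by linarith [hs, hzz.ge, hzz.le]
    rw [hz]
    simp [ComplexFluid.ι, inv_mul_cancel_left₀ hρ0']
  -- Step 5 : expand the total enthalpy gradient
  have dξ : DifferentiableAt ℝ (fun y => K.ξc y) x := by
    have hfe : (fun y => K.ξc y) = fun y => K.φ (K.pt y) - K.ι y * K.dφι y
        - (∑ α, K.dφν y α * K.ν y α) - ∑ α, ∑ j, K.dφN y α j * K.Dν y α j := rfl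
    rw [hfe]
    exact ((dφpt.fun_sub (dι.fun_mul ddφι)).fun_sub
        (DifferentiableAt.fun_sum fun α _ => (ddφν α).fun_mul (dν α))).fun_sub
      (DifferentiableAt.fun_sum fun α _ =>
        DifferentiableAt.fun_sum fun j _ => (ddφN α j).fun_mul (dDν α j))
  have dsq : ∀ j : Fin 3, DifferentiableAt ℝ (fun y => K.v y j * K.v y j) x :=
    fun j => (dv j).mul (dv j)
  have h4 : pd i K.hc x
      = (∑ j, K.v x j * pd i (fun y => K.v y j) x) + pd i (fun y => K.ξc y) x := by
    have hfe : K.hc = fun y => (1/2 : ℝ) * (∑ j, K.v y j * K.v y j) + K.ξc y := by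
      funext y; simp [ComplexFluid.hc, pow_two]
    rw [hfe, pd_add i ((DifferentiableAt.fun_sum fun j _ => dsq j).const_mul _) dξ,
        pd_const_mul i _ (DifferentiableAt.fun_sum fun j _ => dsq j),
        pd_sum i (fun j _ => dsq j),
        Finset.sum_congr rfl fun j _ => pd_mul i (dv j) (dv j)]
    congr 1
    rw [Finset.mul_sum]
    exact Finset.sum_congr rfl fun j _ => by ring
  have h5 : pd i (fun y => K.ξc y) x
      = K.temp x * pd i K.η x - K.ι x * pd i (fun y => K.dφι y) x
        - (∑ α, pd i (fun y => K.dφν y α) x * K.ν x α)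
        - (∑ α, ∑ j, pd i (fun y => K.dφN y α j) x * K.Dν x α j) := by
    have hfe : (fun y => K.ξc y) = fun y => K.φ (K.pt y) - K.ι y * K.dφι y
        - (∑ α, K.dφν y α * K.ν y α) - ∑ α, ∑ j, K.dφN y α j * K.Dν y α j := rfl
    rw [hfe,
      pd_sub i ((dφpt.fun_sub (dι.fun_mul ddφι)).fun_sub
          (DifferentiableAt.fun_sum fun α _ => (ddφν α).fun_mul (dν α)))
        (DifferentiableAt.fun_sum fun α _ =>
          DifferentiableAt.fun_sum fun j _ => (ddφN α j).fun_mul (dDν α j)),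
      pd_sub i (dφpt.fun_sub (dι.fun_mul ddφι))
        (DifferentiableAt.fun_sum fun α _ => (ddφν α).fun_mul (dν α)),
      pd_sub i dφpt (dι.fun_mul ddφι),
      pd_mul i dι ddφι,
      pd_sum i (fun α _ => (ddφν α).fun_mul (dν α)),
      Finset.sum_congr rfl fun α _ => pd_mul i (ddφν α) (dν α),
      pd_sum i (fun α _ => DifferentiableAt.fun_sum fun j _ => (ddφN α j).fun_mul (dDν α j)),
      Finset.sum_congr rfl fun α (_ : α ∈ Finset.univ) =>
        pd_sum i (fun j _ => (ddφN α j).fun_mul (dDν α j)),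
      Finset.sum_congr rfl fun α (_ : α ∈ Finset.univ) =>
        Finset.sum_congr rfl fun j _ => pd_mul i (ddφN α j) (dDν α j),
      pd_phi K hx i]
    have c1 : (∑ α, K.dφν x α * pd i (fun y => K.ν y α) x)
        = ∑ α, pd i (fun y => K.ν y α) x * K.dφν x α :=
      Finset.sum_congr rfl fun α _ => mul_comm _ _
    have c2 : (∑ α, ∑ j, K.dφN x α j * pd i (fun y => K.Dν y α j) x)
        = ∑ α, ∑ j, pd i (fun y => K.Dν y α j) x * K.dφN x α j :=
      Finset.sum_congr rfl fun α _ => Finset.sum_congr rfl fun j _ => mul_comm _ _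
    simp only [Finset.sum_add_distrib]
    rw [c1, c2]
    ring
  -- Final assembly
  rw [h1, hA, h4, h5]
  simp only [h3]
  ring
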